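/- Let g(v) = ∑_{i=1}^m g_i(v_i) be separable convex with each g_i: ℝ → ℝ convex, and W ∈ ℤ^{m×n}. Then f(x) = g(Wx) admits δ-proximity with δ ≤ 2m(2m‖W‖_∞ + 1)^m; i.e., for every minimizer x* of f over [0,1]^n with at most m fractional entries there exists a minimizer z* of f over {0,1}^n with ‖x* − z*‖₁ ≤ 2m(2m‖W‖_∞ + 1)^m. -/

import Mathlib

open Finset

attribute [local instance] Classical.propDecidable

/-- 1-d convexity exchange: if `a*b ≥ 0` then `φ(t+a)+φ(t+b) ≤ φ t + φ(t+a+b)`. -/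
lemma convex_exchange (φ : ℝ → ℝ) (hφ : ConvexOn ℝ Set.univ φ) (t a b : ℝ)
    (hab : 0 ≤ a * b) : φ (t + a) + φ (t + b) ≤ φ t + φ (t + a + b) := by
  rcases eq_or_ne a 0 with rfl | ha
  · have : t + 0 + b = t + b := by ring
    simp [this]
  rcases eq_or_ne b 0 with rfl | hb
  · have : t + a + 0 = t + a := by ring
    simp [this]; linarith
  have hsigns : (0 < a ∧ 0 < b) ∨ (a < 0 ∧ b < 0) := by
    rcases lt_or_gt_of_ne ha with h | h
    · right; refine ⟨h, ?_⟩
      rcases lt_or_gt_of_ne hb with h' | h'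
      · exact h'
      · exfalso; nlinarith
    · left; refine ⟨h, ?_⟩
      rcases lt_or_gt_of_ne hb with h' | h'
      · exfalso; nlinarith
      · exact h'
  have hsumne : a + b ≠ 0 := by rcases hsigns with ⟨h1, h2⟩ | ⟨h1, h2⟩ <;> intro hc <;> linarith
  set θ : ℝ := a / (a + b) with hθ
  have hθ0 : 0 ≤ θ := by
    rcases hsigns with ⟨h1, h2⟩ | ⟨h1, h2⟩
    · positivity
    · exact le_of_lt (div_pos_of_neg_of_neg h1 (by linarith))
  have hθ1 : θ ≤ 1 := by
    rcases hsigns with ⟨h1, h2⟩ | ⟨h1, h2⟩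
    · rw [hθ, div_le_one (by linarith)]; linarith
    · have hrw : a / (a + b) = (-a) / (-(a + b)) := by
        rw [neg_div_neg_eq]
      rw [hθ, hrw, div_le_one (by linarith)]; linarith
  have h1 : φ (t + a) ≤ (1 - θ) * φ t + θ * φ (t + a + b) := by
    have := hφ.2 (Set.mem_univ t) (Set.mem_univ (t + a + b))
      (show (0:ℝ) ≤ 1 - θ by linarith) hθ0 (show (1 - θ) + θ = 1 by ring)
    have harg : (1 - θ) * t + θ * (t + a + b) = t + a := by
      field_simp [hθ]
      have hθab : θ * (a + b) = a := by rw [hθ, div_mul_cancel₀ _ hsumne]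
      linear_combination hθab
    simpa [smul_eq_mul, harg] using this
  have h2 : φ (t + b) ≤ θ * φ t + (1 - θ) * φ (t + a + b) := by
    have := hφ.2 (Set.mem_univ t) (Set.mem_univ (t + a + b))
      hθ0 (show (0:ℝ) ≤ 1 - θ by linarith) (show θ + (1 - θ) = 1 by ring)
    have harg : θ * t + (1 - θ) * (t + a + b) = t + b := by
      field_simp [hθ]
      have hθab : θ * (a + b) = a := by rw [hθ, div_mul_cancel₀ _ hsumne]
      linear_combination -hθab
    simpa [smul_eq_mul, harg] using this
  nlinarith [h1, h2]

set_option maxHeartbeats 1000000 in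
/-- Reduce a feasible point of the transportation-style polytope to one with
at most `m+1` fractional coordinates, keeping the linear constraints. -/
lemma purify {ι : Type*} [Fintype ι] (m : ℕ) (v : ι → Fin m → ℝ) (S : Finset ι) (c : ℝ) :
    ∀ lam : ι → ℝ, (∀ i ∈ S, lam i ∈ Set.Icc (0:ℝ) 1) → (∑ i ∈ S, lam i = c) →
    (∀ j, ∑ i ∈ S, lam i * v i j = 0) →
    ∃ lam' : ι → ℝ, (∀ i ∈ S, lam' i ∈ Set.Icc (0:ℝ) 1) ∧ (∑ i ∈ S, lam' i = c) ∧
      (∀ j, ∑ i ∈ S, lam' i * v i j = 0) ∧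
      (S.filter (fun i => lam' i ≠ 0 ∧ lam' i ≠ 1)).card ≤ m + 1 := by
  suffices H : ∀ d : ℕ, ∀ lam : ι → ℝ, (S.filter (fun i => lam i ≠ 0 ∧ lam i ≠ 1)).card = d →
      (∀ i ∈ S, lam i ∈ Set.Icc (0:ℝ) 1) → (∑ i ∈ S, lam i = c) →
      (∀ j, ∑ i ∈ S, lam i * v i j = 0) →
      ∃ lam' : ι → ℝ, (∀ i ∈ S, lam' i ∈ Set.Icc (0:ℝ) 1) ∧ (∑ i ∈ S, lam' i = c) ∧
        (∀ j, ∑ i ∈ S, lam' i * v i j = 0) ∧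
        (S.filter (fun i => lam' i ≠ 0 ∧ lam' i ≠ 1)).card ≤ m + 1 by
    intro lam h1 h2 h3
    exact H _ lam rfl h1 h2 h3
  intro d
  induction d using Nat.strong_induction_on with
  | _ d IH =>
  intro lam hd h01 hsum hv
  by_cases hle : (S.filter (fun i => lam i ≠ 0 ∧ lam i ≠ 1)).card ≤ m + 1
  · exact ⟨lam, h01, hsum, hv, hle⟩
  push_neg at hle
  set F : Finset ι := S.filter (fun i => lam i ≠ 0 ∧ lam i ≠ 1) with hF
  have hFS : F ⊆ S := filter_subset _ _
  have hFfrac : ∀ i ∈ F, 0 < lam i ∧ lam i < 1 := by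
    intro i hi
    rw [hF, mem_filter] at hi
    obtain ⟨hiS, h0, h1⟩ := hi
    obtain ⟨ha, hb⟩ := h01 i hiS
    exact ⟨lt_of_le_of_ne ha (Ne.symm h0), lt_of_le_of_ne hb h1⟩
  -- a nontrivial linear relation among the vectors (1, v i) for i ∈ F
  set w : {x // x ∈ F} → (Fin (m+1) → ℝ) := fun i => Fin.cons 1 (v i.1) with hw
  have hnli : ¬ LinearIndependent ℝ w := by
    intro hli
    have := hli.fintype_card_le_finrank
    rw [Fintype.card_coe, Module.finrank_pi] at this
    simp only [Fintype.card_fin] at this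
    omega
  obtain ⟨g, hg0, ⟨i0, hi0⟩⟩ := Fintype.not_linearIndependent_iff.mp hnli
  set μ : ι → ℝ := fun i => if h : i ∈ F then g ⟨i, h⟩ else 0 with hμ
  have hμ0 : ∀ i ∉ F, μ i = 0 := by
    intro i hi; simp only [hμ, dif_neg hi]
  have hgsum : ∀ i ∈ F, ∀ j : Fin m, True := fun _ _ _ => trivial
  have hsum0 : ∑ i ∈ F, μ i = 0 := by
    rw [← Finset.sum_attach F μ]
    have : ∀ i : {x // x ∈ F}, μ i.1 = g i := by
      intro i; simp only [hμ, dif_pos i.2]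
    rw [Finset.sum_congr rfl (fun i _ => this i)]
    have := congrFun hg0 0
    simpa [hw, Fin.cons_zero] using this
  have hvsum0 : ∀ j, ∑ i ∈ F, μ i * v i j = 0 := by
    intro j
    rw [← Finset.sum_attach F (fun i => μ i * v i j)]
    have : ∀ i : {x // x ∈ F}, μ i.1 * v i.1 j = g i * v i.1 j := by
      intro i; simp only [hμ, dif_pos i.2]
    rw [Finset.sum_congr rfl (fun i _ => this i)]
    have := congrFun hg0 j.succ
    simpa [hw, Fin.cons_succ] using this
  -- the set where μ is nonzero
  set P : Finset ι := F.filter (fun i => μ i ≠ 0) with hP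
  have hPne : P.Nonempty := by
    refine ⟨i0.1, ?_⟩
    rw [hP, mem_filter]
    exact ⟨i0.2, by simpa [hμ, dif_pos i0.2] using hi0⟩
  set bound : ι → ℝ := fun i => if 0 < μ i then (1 - lam i) / μ i else lam i / (-μ i) with hbound
  obtain ⟨istar, histar, hminb⟩ := P.exists_min_image bound hPne
  set t : ℝ := bound istar with ht
  have histarF : istar ∈ F := (mem_filter.mp histar).1
  have hμistar : μ istar ≠ 0 := (mem_filter.mp histar).2
  have hboundpos : ∀ i ∈ P, 0 ≤ bound i := by
    intro i hi
    rw [hP, mem_filter] at hi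
    obtain ⟨hiF, hμi⟩ := hi
    obtain ⟨hl0, hl1⟩ := hFfrac i hiF
    rw [hbound]
    rcases lt_or_gt_of_ne hμi with h | h
    · simp only [if_neg (not_lt.mpr (le_of_lt h))]
      exact div_nonneg (le_of_lt hl0) (by linarith)
    · simp only [if_pos h]
      exact div_nonneg (by linarith) (le_of_lt h)
  have ht0 : 0 ≤ t := hboundpos istar histar
  set lam' : ι → ℝ := fun i => lam i + t * μ i with hlam'
  have hunch : ∀ i ∉ F, lam' i = lam i := by
    intro i hi; simp [hlam', hμ0 i hi]
  -- each coordinate stays in [0,1]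
  have hrange : ∀ i ∈ S, lam' i ∈ Set.Icc (0:ℝ) 1 := by
    intro i hiS
    by_cases hiF : i ∈ F
    · obtain ⟨hl0, hl1⟩ := hFfrac i hiF
      rcases lt_trichotomy (μ i) 0 with h | h | h
      · have hne : μ i ≠ 0 := ne_of_lt h
        have hiP : i ∈ P := mem_filter.mpr ⟨hiF, ne_of_lt h⟩
        have htb : t ≤ bound i := hminb i hiP
        have hbi : bound i = lam i / (-μ i) := by
          rw [hbound]; simp [not_lt.mpr (le_of_lt h)]
        constructor
        · have : t * μ i ≥ (lam i / (-μ i)) * μ i := by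
            apply mul_le_mul_of_nonpos_right _ (le_of_lt h)
            rw [← hbi]; exact htb
          have key : (lam i / (-μ i)) * μ i = - lam i := by
            rw [div_mul_eq_mul_div, div_neg, mul_div_assoc, div_self hne, mul_one]
          simp only [hlam']
          nlinarith
        · have : t * μ i ≤ 0 := mul_nonpos_of_nonneg_of_nonpos ht0 (le_of_lt h)
          simp only [hlam']; linarith
      · simp [hlam', h]; constructor <;> linarith
      · have hne : μ i ≠ 0 := ne_of_gt h
        have hiP : i ∈ P := mem_filter.mpr ⟨hiF, ne_of_gt h⟩
        have htb : t ≤ bound i := hminb i hiP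
        have hbi : bound i = (1 - lam i) / μ i := by
          rw [hbound]; simp [h]
        constructor
        · have : 0 ≤ t * μ i := mul_nonneg ht0 (le_of_lt h)
          simp only [hlam']; linarith
        · have : t * μ i ≤ ((1 - lam i) / μ i) * μ i := by
            apply mul_le_mul_of_nonneg_right _ (le_of_lt h)
            rw [← hbi]; exact htb
          have key : ((1 - lam i) / μ i) * μ i = 1 - lam i := div_mul_cancel₀ _ hne
          simp only [hlam']; nlinarith
    · rw [hunch i hiF]; exact h01 i hiS
  -- sums are conserved
  have hμS : ∑ i ∈ S, μ i = 0 := by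
    rw [← Finset.sum_subset hFS (fun i _ hi => hμ0 i hi)]
    exact hsum0
  have hμvS : ∀ j, ∑ i ∈ S, μ i * v i j = 0 := by
    intro j
    rw [← Finset.sum_subset hFS (fun i _ hi => by rw [hμ0 i hi, zero_mul])]
    exact hvsum0 j
  have hsum' : ∑ i ∈ S, lam' i = c := by
    simp only [hlam']
    rw [Finset.sum_add_distrib, ← Finset.mul_sum, hμS, hsum]
    ring
  have hv' : ∀ j, ∑ i ∈ S, lam' i * v i j = 0 := by
    intro j
    simp only [hlam', add_mul]
    rw [Finset.sum_add_distrib, hv j]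
    have : ∑ i ∈ S, t * μ i * v i j = t * ∑ i ∈ S, μ i * v i j := by
      rw [Finset.mul_sum]; congr 1; ext i; ring
    rw [this, hμvS j]
    ring
  -- istar hits the boundary
  have histar01 : lam' istar = 0 ∨ lam' istar = 1 := by
    rcases lt_or_gt_of_ne hμistar with h | h
    · left
      have hne : μ istar ≠ 0 := ne_of_lt h
      have hbi : t = lam istar / (-μ istar) := by
        rw [ht, hbound]; simp [not_lt.mpr (le_of_lt h)]
      simp only [hlam', hbi]
      rw [div_mul_eq_mul_div, div_neg, mul_div_assoc, div_self hne, mul_one]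
      ring
    · right
      have hne : μ istar ≠ 0 := ne_of_gt h
      have hbi : t = (1 - lam istar) / μ istar := by
        rw [ht, hbound]; simp [h]
      simp only [hlam', hbi]
      rw [div_mul_cancel₀ _ hne]
      ring
  -- fractional set shrinks
  have hsubset : S.filter (fun i => lam' i ≠ 0 ∧ lam' i ≠ 1) ⊆ F.erase istar := by
    intro i hi
    rw [mem_filter] at hi
    obtain ⟨hiS, hne0, hne1⟩ := hi
    have hiF : i ∈ F := by
      by_contra hiF
      rw [hunch i hiF] at hne0 hne1
      have : i ∈ F := mem_filter.mpr ⟨hiS, hne0, hne1⟩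
      exact hiF this
    refine mem_erase.mpr ⟨?_, hiF⟩
    intro hcontra
    subst hcontra
    rcases histar01 with h | h
    · exact hne0 h
    · exact hne1 h
  have hcard : (S.filter (fun i => lam' i ≠ 0 ∧ lam' i ≠ 1)).card < d := by
    calc (S.filter (fun i => lam' i ≠ 0 ∧ lam' i ≠ 1)).card
        ≤ (F.erase istar).card := card_le_card hsubset
      _ < F.card := card_erase_lt_of_mem histarF
      _ = d := by rw [← hd]
  exact IH _ hcard lam' rfl hrange hsum' hv'

section Steinitz

variable {ι : Type*} [Fintype ι] {m : ℕ}

/-- Invariant for the Grinberg–Sevastyanov construction. -/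
def SGood (m : ℕ) (v : ι → Fin m → ℝ) (k : ℕ) (S : Finset ι) (lam : ι → ℝ) : Prop :=
  S.card = k ∧ (m ≤ k →
    ((∀ i ∈ S, lam i ∈ Set.Icc (0:ℝ) 1) ∧ (∑ i ∈ S, lam i = (k:ℝ) - m) ∧
      (∀ j, ∑ i ∈ S, lam i * v i j = 0)))

lemma sgood_step (v : ι → Fin m → ℝ) (k : ℕ) (S : Finset ι) (lam : ι → ℝ)
    (h : SGood m v (k+1) S lam) :
    ∃ S' : Finset ι, ∃ lam' : ι → ℝ, S' ⊆ S ∧ SGood m v k S' lam' := by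
  obtain ⟨hcard, hrest⟩ := h
  by_cases hk : m ≤ k
  · rcases eq_or_lt_of_le hk with rfl | hlt
    · -- k = m : take any subset of size m with the zero function
      obtain ⟨S', hS'sub, hS'card⟩ :=
        Finset.exists_subset_card_eq (by omega : m ≤ S.card)
      refine ⟨S', fun _ => 0, hS'sub, hS'card, fun _ => ⟨?_, ?_, ?_⟩⟩
      · intro i _; exact ⟨le_refl 0, zero_le_one⟩
      · simp
      · intro j; simp
    · -- k > m
      obtain ⟨h01, hsum, hv0⟩ := hrest (by omega)
      have hmk : (m:ℝ) ≤ k := by exact_mod_cast hk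
      have hkm : (0:ℝ) < (k:ℝ) + 1 - m := by linarith
      set μ : ι → ℝ := fun i => (((k:ℝ) - m) / ((k:ℝ) + 1 - m)) * lam i with hμ
      have hfac0 : (0:ℝ) ≤ ((k:ℝ) - m) / ((k:ℝ) + 1 - m) :=
        div_nonneg (by linarith) (le_of_lt hkm)
      have hfac1 : ((k:ℝ) - m) / ((k:ℝ) + 1 - m) ≤ 1 := by
        rw [div_le_one hkm]; linarith
      have hμ01 : ∀ i ∈ S, μ i ∈ Set.Icc (0:ℝ) 1 := by
        intro i hi
        obtain ⟨ha, hb⟩ := h01 i hi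
        simp only [hμ]
        exact ⟨mul_nonneg hfac0 ha, by nlinarith⟩
      have hμsum : ∑ i ∈ S, μ i = (k:ℝ) - m := by
        simp only [hμ]
        rw [← Finset.mul_sum, hsum]
        have hc : ((k:ℝ) + 1) - m = (k:ℝ) + 1 - m := by ring
        push_cast
        rw [hc]
        field_simp
      have hμv : ∀ j, ∑ i ∈ S, μ i * v i j = 0 := by
        intro j
        simp only [hμ, mul_assoc]
        rw [← Finset.mul_sum, hv0 j, mul_zero]
      obtain ⟨lam', h01', hsum', hv', hfrac'⟩ := purify m v S ((k:ℝ) - m) μ hμ01 hμsum hμv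
      -- find a zero coordinate
      have hzero : ∃ j ∈ S, lam' j = 0 := by
        by_contra hno
        push_neg at hno
        set Fr := S.filter (fun i => lam' i ≠ 0 ∧ lam' i ≠ 1) with hFr
        set O := S.filter (fun i => lam' i = 1) with hO
        have hiff : ∀ i ∈ S, (¬ lam' i = 1) ↔ (lam' i ≠ 0 ∧ lam' i ≠ 1) :=
          fun i hi => ⟨fun h => ⟨hno i hi, h⟩, fun h => h.2⟩
        have hFrEq : S.filter (fun i => ¬ lam' i = 1) = Fr := Finset.filter_congr hiff
        have hsplitsum : ∑ i ∈ O, lam' i + ∑ i ∈ Fr, lam' i = ∑ i ∈ S, lam' i := by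
          rw [← hFrEq]
          exact Finset.sum_filter_add_sum_filter_not S _ lam'
        have hsplitcard : O.card + Fr.card = k + 1 := by
          rw [← hFrEq, ← hcard]
          exact Finset.card_filter_add_card_filter_not _
        have hOsum : ∑ i ∈ O, lam' i = (O.card : ℝ) := by
          rw [Finset.sum_congr rfl (fun i hi => (mem_filter.mp hi).2)]
          simp [hO]
        have hOcard : ((k:ℝ)) - m ≤ (O.card : ℝ) := by
          have h1 : (O.card : ℝ) + Fr.card = (k:ℝ) + 1 := by exact_mod_cast hsplitcard
          have h2 : (Fr.card : ℝ) ≤ (m:ℝ) + 1 := by exact_mod_cast hfrac'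
          linarith
        rcases Finset.eq_empty_or_nonempty Fr with hFre | hFrne
        · rw [hFre] at hsplitsum hsplitcard
          simp at hsplitsum hsplitcard
          rw [hOsum] at hsplitsum
          rw [hsum'] at hsplitsum
          have : (O.card : ℝ) = (k:ℝ) + 1 := by exact_mod_cast hsplitcard
          linarith
        · have hpos : 0 < ∑ i ∈ Fr, lam' i := by
            apply Finset.sum_pos _ hFrne
            intro i hi
            rw [hFr, mem_filter] at hi
            obtain ⟨hiS, hne0, _⟩ := hi
            exact lt_of_le_of_ne (h01' i hiS).1 (Ne.symm hne0)
          rw [hOsum, hsum'] at hsplitsum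
          linarith
      obtain ⟨j0, hj0S, hj00⟩ := hzero
      refine ⟨S.erase j0, lam', Finset.erase_subset _ _, ?_, fun _ => ⟨?_, ?_, ?_⟩⟩
      · rw [Finset.card_erase_of_mem hj0S, hcard]; omega
      · intro i hi; exact h01' i (Finset.mem_of_mem_erase hi)
      · rw [Finset.sum_erase _ hj00, hsum']
      · intro j
        rw [Finset.sum_erase _ (by rw [hj00, zero_mul]), hv' j]
  · -- k < m : only cardinality matters
    obtain ⟨S', hS'sub, hS'card⟩ := Finset.exists_subset_card_eq (by omega : k ≤ S.card)
    exact ⟨S', fun _ => 0, hS'sub, hS'card, fun h => absurd h (by omega)⟩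

end Steinitz

noncomputable def chain {ι : Type*} [Fintype ι] (m : ℕ) (v : ι → Fin m → ℝ) (T : ℕ)
    (lam0 : ι → ℝ) : ℕ → Finset ι × (ι → ℝ)
  | 0 => (Finset.univ, lam0)
  | d+1 => if h : ∃ q : Finset ι × (ι → ℝ), q.1 ⊆ (chain m v T lam0 d).1 ∧
        SGood m v (T - (d+1)) q.1 q.2
      then h.choose else chain m v T lam0 d

lemma steinitz_chain {ι : Type*} [Fintype ι] {m : ℕ} (v : ι → Fin m → ℝ) (Δ : ℝ) (hΔ0 : 0 ≤ Δ)
    (hv : ∀ i j, |v i j| ≤ Δ) (hsum : ∀ j, ∑ i, v i j = 0) :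
    ∃ A : ℕ → Finset ι, A 0 = ∅ ∧ (∀ k, A k ⊆ A (k+1)) ∧
      (∀ k, k ≤ Fintype.card ι → (A k).card = k) ∧
      (∀ k, Fintype.card ι ≤ k → A k = Finset.univ) ∧
      (∀ k j, |∑ i ∈ A k, v i j| ≤ (m:ℝ) * Δ) := by
  set T := Fintype.card ι with hT
  set lam0 : ι → ℝ := fun _ => ((T:ℝ) - m) / T with hlam0
  have base : SGood m v T Finset.univ lam0 := by
    refine ⟨by simp [hT], fun hmT => ⟨?_, ?_, ?_⟩⟩
    · intro i _
      rcases Nat.eq_zero_or_pos T with h0 | hpos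
      · simp [hlam0, h0]
      · have h1 : (0:ℝ) < T := by exact_mod_cast hpos
        have h2 : (m:ℝ) ≤ T := by exact_mod_cast hmT
        constructor
        · apply div_nonneg (by linarith) (by linarith)
        · rw [div_le_one h1]; linarith
    · rcases Nat.eq_zero_or_pos T with h0 | hpos
      · have hm0 : m = 0 := by omega
        have huniv : (Finset.univ : Finset ι).card = 0 := by simp [← hT, h0]
        have hemp : (Finset.univ : Finset ι) = ∅ := Finset.card_eq_zero.mp huniv
        rw [hemp]
        simp [h0, hm0]
      · have h1 : (0:ℝ) < T := by exact_mod_cast hpos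
        rw [Finset.sum_const, Finset.card_univ, ← hT]
        simp only [hlam0, nsmul_eq_mul]
        field_simp
    · intro j
      simp only [hlam0]
      rw [← Finset.mul_sum, hsum j, mul_zero]
  have good : ∀ d, d ≤ T → SGood m v (T - d) (chain m v T lam0 d).1 (chain m v T lam0 d).2 := by
    intro d
    induction d with
    | zero => intro _; simpa [chain] using base
    | succ d IH =>
      intro hd
      have hgd := IH (by omega)
      have hidx : T - d = (T - (d+1)) + 1 := by omega
      rw [hidx] at hgd
      obtain ⟨S', lam', hsub, hg⟩ := sgood_step v (T - (d+1)) _ _ hgd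
      have hex : ∃ q : Finset ι × (ι → ℝ), q.1 ⊆ (chain m v T lam0 d).1 ∧
          SGood m v (T - (d+1)) q.1 q.2 := ⟨(S', lam'), hsub, hg⟩
      show SGood m v (T - (d+1)) (chain m v T lam0 (d+1)).1 (chain m v T lam0 (d+1)).2
      rw [chain, dif_pos hex]
      exact hex.choose_spec.2
  have chsub : ∀ d, (chain m v T lam0 (d+1)).1 ⊆ (chain m v T lam0 d).1 := by
    intro d
    by_cases hex : ∃ q : Finset ι × (ι → ℝ), q.1 ⊆ (chain m v T lam0 d).1 ∧
        SGood m v (T - (d+1)) q.1 q.2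
    · rw [chain, dif_pos hex]; exact hex.choose_spec.1
    · rw [chain, dif_neg hex]
  set A : ℕ → Finset ι := fun k => if k ≤ T then (chain m v T lam0 (T - k)).1 else Finset.univ
    with hA
  have hAcard : ∀ k, k ≤ T → (A k).card = k := by
    intro k hk
    have := (good (T - k) (by omega)).1
    rw [show T - (T - k) = k from by omega] at this
    simp only [hA, if_pos hk]
    exact this
  have hAuniv : ∀ k, T ≤ k → A k = Finset.univ := by
    intro k hk
    simp only [hA]
    by_cases h : k ≤ T
    · rw [if_pos h, show T - k = 0 from by omega]
      rfl
    · rw [if_neg h]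
  refine ⟨A, ?_, ?_, hAcard, hAuniv, ?_⟩
  · have := hAcard 0 (Nat.zero_le T)
    exact Finset.card_eq_zero.mp this
  · intro k
    by_cases hk1 : k + 1 ≤ T
    · have hk : k ≤ T := by omega
      simp only [hA, if_pos hk1, if_pos hk]
      have := chsub (T - (k+1))
      rw [show T - (k+1) + 1 = T - k from by omega] at this
      exact this
    · rw [hAuniv (k+1) (by omega)]
      exact Finset.subset_univ _
  · intro k j
    by_cases hk : k ≤ T
    · have hSG := good (T - k) (by omega)
      rw [show T - (T - k) = k from by omega] at hSG
      obtain ⟨hcard, hrest⟩ := hSG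
      have hAk : A k = (chain m v T lam0 (T - k)).1 := by simp only [hA, if_pos hk]
      set S := (chain m v T lam0 (T - k)).1
      set lam := (chain m v T lam0 (T - k)).2
      rw [hAk]
      by_cases hmk : m ≤ k
      · obtain ⟨h01, hsumS, hv0⟩ := hrest hmk
        have hkey : ∑ i ∈ S, v i j = ∑ i ∈ S, (1 - lam i) * v i j := by
          have : ∑ i ∈ S, (1 - lam i) * v i j
              = ∑ i ∈ S, v i j - ∑ i ∈ S, lam i * v i j := by
            rw [← Finset.sum_sub_distrib]
            congr 1; ext i; ring
          rw [this, hv0 j, sub_zero]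
        rw [hkey]
        calc |∑ i ∈ S, (1 - lam i) * v i j| ≤ ∑ i ∈ S, |(1 - lam i) * v i j| :=
              Finset.abs_sum_le_sum_abs _ _
          _ ≤ ∑ i ∈ S, (1 - lam i) * Δ := by
              apply Finset.sum_le_sum
              intro i hi
              obtain ⟨ha, hb⟩ := h01 i hi
              rw [abs_mul, abs_of_nonneg (by linarith : (0:ℝ) ≤ 1 - lam i)]
              exact mul_le_mul_of_nonneg_left (hv i j) (by linarith)
          _ = (m:ℝ) * Δ := by
              rw [← Finset.sum_mul]
              congr 1
              rw [Finset.sum_sub_distrib, Finset.sum_const, hcard, hsumS]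
              push_cast
              ring
      · calc |∑ i ∈ S, v i j| ≤ ∑ i ∈ S, |v i j| := Finset.abs_sum_le_sum_abs _ _
          _ ≤ ∑ i ∈ S, Δ := Finset.sum_le_sum (fun i _ => hv i j)
          _ = (k:ℝ) * Δ := by rw [Finset.sum_const, hcard, nsmul_eq_mul]
          _ ≤ (m:ℝ) * Δ := by
              apply mul_le_mul_of_nonneg_right _ hΔ0
              exact_mod_cast (by omega : k ≤ m)
    · rw [hAuniv k (by omega)]
      rw [hsum j]
      simp only [abs_zero]
      positivity

lemma sum_int_of_int {κ : Type*} (B : Finset κ) (f : κ → ℝ)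
    (h : ∀ i ∈ B, ∃ z : ℤ, f i = (z:ℝ)) : ∃ z : ℤ, ∑ i ∈ B, f i = (z:ℝ) := by
  classical
  induction B using Finset.induction_on with
  | empty => exact ⟨0, by simp⟩
  | @insert a s hni ih =>
    obtain ⟨za, hza⟩ := h a (Finset.mem_insert_self a s)
    obtain ⟨zs, hzs⟩ := ih (fun i hi => h i (Finset.mem_insert_of_mem hi))
    exact ⟨za + zs, by rw [Finset.sum_insert hni, hza, hzs]; push_cast; ring⟩

set_option maxHeartbeats 1000000 in
lemma exists_zero_piece {κ : Type*} [Fintype κ] (m Δ : ℕ)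
    (v : κ → Fin m → ℝ)
    (hv : ∀ i j, |v i j| ≤ (Δ:ℝ))
    (hsum : ∀ j, ∑ i, v i j = 0)
    (Frac : Finset κ)
    (hint : ∀ i ∉ Frac, ∀ j, ∃ z : ℤ, v i j = (z:ℝ))
    (hφ : 1 ≤ Frac.card)
    (hbig : Frac.card * (2*m*Δ+1)^m < Fintype.card κ) :
    ∃ B : Finset κ, B.Nonempty ∧ (∀ i ∈ B, i ∉ Frac) ∧ ∀ j, ∑ i ∈ B, v i j = 0 := by
  by_contra hno
  push_neg at hno
  obtain ⟨A, hA0, hAstep, hAcard, hAuniv, hAbd⟩ :=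
    steinitz_chain v (Δ:ℝ) (by positivity) hv hsum
  set T := Fintype.card κ with hT
  have hmono : ∀ k l, k ≤ l → A k ⊆ A l := by
    have haux : ∀ d k, A k ⊆ A (k + d) := by
      intro d
      induction d with
      | zero => intro k; exact Finset.Subset.refl _
      | succ d IH => intro k; exact (IH k).trans (by rw [show k + (d+1) = (k+d) + 1 from rfl]; exact hAstep _)
    intro k l hkl
    obtain ⟨d, rfl⟩ := Nat.exists_eq_add_of_le hkl
    exact haux d k
  set p : ℕ → Fin m → ℝ := fun k j => ∑ i ∈ A k, v i j with hp
  set cls : ℕ → ℕ := fun k => (A k ∩ Frac).card with hcls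
  set φ := Frac.card with hφdef
  set e : ℕ → Fin m → ℤ := fun k j => ⌈p k j⌉ with he
  set H : ℕ → ℕ × (Fin m → ℤ) := fun k => ((if cls k = φ then 0 else cls k), e k) with hH
  have hclsmono : ∀ k l, k ≤ l → cls k ≤ cls l := by
    intro k l hkl
    exact Finset.card_le_card (Finset.inter_subset_inter (hmono k l hkl) (le_refl _))
  have hclsle : ∀ k, cls k ≤ φ := fun k => Finset.card_le_card Finset.inter_subset_right
  -- helper: a nonempty Frac-free piece whose sum is `p a - p b` with equal ceilings is impossible
  have hpeq : ∀ a b : ℕ, e a = e b → ∀ (B : Finset κ), B.Nonempty → (∀ i ∈ B, i ∉ Frac) →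
      (∀ j, ∑ i ∈ B, v i j = p a j - p b j) → False := by
    intro a b hce B hBne hBF hBsum
    obtain ⟨j, hj⟩ := hno B hBne hBF
    obtain ⟨z, hz⟩ := sum_int_of_int B (fun i => v i j) (fun i hi => hint i (hBF i hi) j)
    have hplk : p a j = p b j + (z:ℝ) := by
      have := hBsum j
      rw [hz] at this
      linarith
    have hceil : ⌈p a j⌉ = ⌈p b j⌉ + z := by rw [hplk, Int.ceil_add_intCast]
    have hz0 : z = 0 := by
      have := congrFun hce j
      simp only [he] at this
      omega
    exact hj (by rw [hBsum j, hplk, hz0]; simp)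
  -- main combinatorial claim : no two distinct indices in [1,T] share the same H-value
  have claim : ∀ k l, k ∈ Finset.Icc 1 T → l ∈ Finset.Icc 1 T → k < l → H k ≠ H l := by
    intro k l hk hl hkl heq
    rw [Finset.mem_Icc] at hk hl
    simp only [hH, Prod.mk.injEq] at heq
    obtain ⟨hccls, hce⟩ := heq
    have hsub : A k ⊆ A l := hmono k l (le_of_lt hkl)
    by_cases hcc : cls k = cls l
    · -- same class: use the piece A l \ A k
      have hintereq : A k ∩ Frac = A l ∩ Frac :=
        Finset.eq_of_subset_of_card_le (Finset.inter_subset_inter hsub (le_refl _))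
          (le_of_eq hcc.symm)
      have hBF : ∀ i ∈ A l \ A k, i ∉ Frac := by
        intro i hi hiF
        rw [Finset.mem_sdiff] at hi
        have hmem : i ∈ A l ∩ Frac := Finset.mem_inter.mpr ⟨hi.1, hiF⟩
        rw [← hintereq] at hmem
        exact hi.2 (Finset.mem_inter.mp hmem).1
      have hBne : (A l \ A k).Nonempty := by
        rw [← Finset.card_pos, Finset.card_sdiff_of_subset hsub, hAcard k hk.2, hAcard l hl.2]
        omega
      have hBsum : ∀ j, ∑ i ∈ A l \ A k, v i j = p l j - p k j := by
        intro j
        rw [Finset.sum_sdiff_eq_sub hsub]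
      exact hpeq l k hce.symm _ hBne hBF hBsum
    · -- classes differ: then cls k = 0 and cls l = φ; use the wrap-around piece
      have hclskl : cls k ≤ cls l := hclsmono k l (le_of_lt hkl)
      have hclskφ : cls k ≠ φ := by
        intro h
        have h2 := hclsle l
        omega
      have hclslφ : cls l = φ := by
        by_contra h
        rw [if_neg hclskφ, if_neg h] at hccls
        exact hcc hccls
      have hclsk0 : cls k = 0 := by
        rw [if_neg hclskφ, if_pos hclslφ] at hccls
        exact hccls
      have hAkF : A k ∩ Frac = ∅ := Finset.card_eq_zero.mp hclsk0
      have hFsub : Frac ⊆ A l := by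
        have heq2 : A l ∩ Frac = Frac :=
          Finset.eq_of_subset_of_card_le Finset.inter_subset_right (le_of_eq hclslφ.symm)
        intro i hi
        have hmem : i ∈ A l ∩ Frac := by rw [heq2]; exact hi
        exact (Finset.mem_inter.mp hmem).1
      have hdisj : Disjoint (A k) (Finset.univ \ A l) := by
        rw [Finset.disjoint_right]
        intro i hi hik
        rw [Finset.mem_sdiff] at hi
        exact hi.2 (hsub hik)
      have hBne : (A k ∪ (Finset.univ \ A l)).Nonempty := by
        apply Finset.Nonempty.mono Finset.subset_union_left
        rw [← Finset.card_pos, hAcard k hk.2]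
        omega
      have hBF : ∀ i ∈ A k ∪ (Finset.univ \ A l), i ∉ Frac := by
        intro i hi hiF
        rw [Finset.mem_union] at hi
        rcases hi with hi | hi
        · have hmem : i ∈ A k ∩ Frac := Finset.mem_inter.mpr ⟨hi, hiF⟩
          rw [hAkF] at hmem
          exact absurd hmem (Finset.notMem_empty i)
        · rw [Finset.mem_sdiff] at hi
          exact hi.2 (hFsub hiF)
      have hBsum : ∀ j, ∑ i ∈ A k ∪ (Finset.univ \ A l), v i j = p k j - p l j := by
        intro j
        rw [Finset.sum_union hdisj, Finset.sum_sdiff_eq_sub (Finset.subset_univ _), hsum j]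
        simp only [hp]
        ring
      exact hpeq k l hce _ hBne hBF hBsum
  -- pigeonhole
  have hmaps : ∀ k ∈ Finset.Icc 1 T, H k ∈
      (Finset.range φ) ×ˢ (Fintype.piFinset fun _ : Fin m => Finset.Icc (-(m*Δ:ℤ)) (m*Δ:ℤ)) := by
    intro k hk
    rw [Finset.mem_product]
    constructor
    · simp only [hH]
      by_cases h : cls k = φ
      · rw [if_pos h]
        exact Finset.mem_range.mpr (by omega)
      · rw [if_neg h]
        exact Finset.mem_range.mpr (lt_of_le_of_ne (hclsle k) h)
    · simp only [hH]
      rw [Fintype.mem_piFinset]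
      intro j
      rw [Finset.mem_Icc]
      have hb := hAbd k j
      have hb1 := (abs_le.mp hb).1
      have hb2 := (abs_le.mp hb).2
      constructor
      · have h1 : ((-(m*Δ:ℤ) : ℤ) : ℝ) ≤ p k j := by push_cast; linarith
        have h2 : ((-(m*Δ:ℤ) : ℤ) : ℝ) ≤ (⌈p k j⌉ : ℝ) := le_trans h1 (Int.le_ceil _)
        exact_mod_cast h2
      · apply Int.ceil_le.mpr
        push_cast
        linarith
  have hinj : Set.InjOn H (Finset.Icc 1 T) := by
    intro k hk l hl heq
    by_contra hne
    rcases lt_or_gt_of_ne hne with h | h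
    · exact claim k l hk hl h heq
    · exact claim l k hl hk h heq.symm
  have hcard := Finset.card_le_card_of_injOn H hmaps hinj
  rw [Nat.card_Icc, Finset.card_product, Finset.card_range, Fintype.card_piFinset] at hcard
  have hIcc : ∀ j : Fin m, (Finset.Icc (-(m*Δ:ℤ)) (m*Δ:ℤ)).card = 2*m*Δ+1 := by
    intro j
    rw [Int.card_Icc]
    have : ((m*Δ:ℤ) + 1 - (-(m*Δ:ℤ))) = ((2*m*Δ+1 : ℕ) : ℤ) := by push_cast; ring
    rw [this]
    exact Int.toNat_natCast _
  rw [Finset.prod_congr rfl (fun j _ => hIcc j), Finset.prod_const, Finset.card_univ,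
    Fintype.card_fin] at hcard
  omega

set_option maxHeartbeats 2000000 in
/-- Proximity for separable convex functions:
δ ≤ 2m(2m‖W‖_∞ + 1)^m. -/
theorem stmt12 (m n : ℕ) (W : Matrix (Fin m) (Fin n) ℤ) (g : Fin m → ℝ → ℝ)
    (hconv : ∀ i, ConvexOn ℝ Set.univ (g i))
    (f : (Fin n → ℝ) → ℝ)
    (hf : f = fun x => ∑ i, g i (((W.map (fun a => (a:ℝ))).mulVec x) i))
    (xs : Fin n → ℝ) (hxs : ∀ i, xs i ∈ Set.Icc (0:ℝ) 1)
    (hmin : ∀ y : Fin n → ℝ, (∀ i, y i ∈ Set.Icc (0:ℝ) 1) → f xs ≤ f y)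
    (hfrac : Set.ncard {i | xs i ≠ 0 ∧ xs i ≠ 1} ≤ m) :
    ∃ zs : Fin n → ℝ, (∀ i, zs i = 0 ∨ zs i = 1) ∧
      (∀ y : Fin n → ℝ, (∀ i, y i = 0 ∨ y i = 1) → f zs ≤ f y) ∧
      ∑ i, |xs i - zs i| ≤
        2 * m * (2 * m * ((Finset.univ.sup (fun p : Fin m × Fin n => (W p.1 p.2).natAbs) : ℕ) : ℝ) + 1) ^ m := by
  set Δn : ℕ := Finset.univ.sup (fun p : Fin m × Fin n => (W p.1 p.2).natAbs) with hΔn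
  set Wr : Matrix (Fin m) (Fin n) ℝ := W.map (fun a => (a:ℝ)) with hWr
  have hRHS0 : (0:ℝ) ≤ 2 * m * (2 * m * (Δn : ℝ) + 1) ^ m := by positivity
  -- trivial case : xs is itself 0/1
  by_cases hall : ∀ i, xs i = 0 ∨ xs i = 1
  · refine ⟨xs, hall, ?_, by simp [hRHS0]⟩
    intro y hy
    apply hmin
    intro i
    rcases hy i with h | h <;> simp [h]
  -- xs has a fractional coordinate, hence m ≥ 1
  push_neg at hall
  obtain ⟨i₀, hi₀0, hi₀1⟩ := hall
  have hm1 : 1 ≤ m := by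
    have hne : {i | xs i ≠ 0 ∧ xs i ≠ 1}.Nonempty := ⟨i₀, hi₀0, hi₀1⟩
    have := Set.Nonempty.ncard_pos (Set.toFinite _) hne
    omega
  have hFxcard : (Finset.univ.filter (fun i => xs i ≠ 0 ∧ xs i ≠ 1)).card ≤ m := by
    have h1 : {i | xs i ≠ 0 ∧ xs i ≠ 1}.ncard
        = (Finset.univ.filter (fun i => xs i ≠ 0 ∧ xs i ≠ 1)).card := by
      rw [Set.ncard_eq_toFinset_card']
      congr 1
      ext i
      simp
    omega
  -- degenerate case : W = 0
  by_cases hΔ0 : Δn = 0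
  · have hW0 : ∀ j i, W j i = 0 := by
      intro j i
      have := Finset.le_sup (f := fun p : Fin m × Fin n => (W p.1 p.2).natAbs)
        (Finset.mem_univ (j, i))
      rw [← hΔn, hΔ0] at this
      exact Int.natAbs_eq_zero.mp (Nat.le_zero.mp this)
    have hmv : ∀ (x : Fin n → ℝ) j, Wr.mulVec x j = 0 := by
      intro x j
      simp [hWr, Matrix.mulVec, dotProduct, Matrix.map_apply, hW0]
    have hfconst : ∀ x y : Fin n → ℝ, f x = f y := by
      intro x y
      rw [hf]
      simp only [hmv]
    refine ⟨fun i => if xs i = 1 then 1 else 0, fun i => by by_cases h : xs i = 1 <;> simp [h], 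
      fun y _ => le_of_eq (hfconst _ y), ?_⟩
    have hbd : ∀ i, |xs i - (if xs i = 1 then (1:ℝ) else 0)| ≤
        (if xs i ≠ 0 ∧ xs i ≠ 1 then (1:ℝ) else 0) := by
      intro i
      obtain ⟨h0, h1⟩ := hxs i
      by_cases h : xs i = 1
      · simp [h]
      · by_cases h' : xs i = 0
        · simp [h', h]
        · rw [if_neg h, if_pos ⟨h', h⟩]
          rw [abs_of_nonneg (by linarith)]
          linarith
    calc ∑ i, |xs i - (if xs i = 1 then (1:ℝ) else 0)|
        ≤ ∑ i, (if xs i ≠ 0 ∧ xs i ≠ 1 then (1:ℝ) else 0) := Finset.sum_le_sum (fun i _ => hbd i)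
      _ = ((Finset.univ.filter (fun i => xs i ≠ 0 ∧ xs i ≠ 1)).card : ℝ) := by
          rw [Finset.sum_boole]
      _ ≤ (m : ℝ) := by exact_mod_cast hFxcard
      _ ≤ 2 * m * (2 * m * (Δn : ℝ) + 1) ^ m := by
          rw [hΔ0]
          push_cast
          rw [mul_zero, zero_add, one_pow, mul_one]
          have : (1:ℝ) ≤ m := by exact_mod_cast hm1
          linarith
  have hΔ1 : 1 ≤ Δn := by omega
  -- choose a closest optimal 0/1 point
  set zb : (Fin n → Bool) → (Fin n → ℝ) := fun b i => if b i then 1 else 0 with hzb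
  have hzb01 : ∀ b i, zb b i = 0 ∨ zb b i = 1 := by
    intro b i
    by_cases h : b i <;> simp [hzb, h]
  have hrep : ∀ y : Fin n → ℝ, (∀ i, y i = 0 ∨ y i = 1) → ∃ b, zb b = y := by
    intro y hy
    refine ⟨fun i => if y i = 1 then true else false, funext fun i => ?_⟩
    rcases hy i with h | h <;> simp [hzb, h]
  obtain ⟨b₁, _, hb₁⟩ := Finset.exists_min_image Finset.univ (fun b => f (zb b))
    Finset.univ_nonempty
  set M := f (zb b₁) with hM
  set S2 : Finset (Fin n → Bool) := Finset.univ.filter (fun b => f (zb b) ≤ M) with hS2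
  obtain ⟨b₂, hb₂S, hb₂min⟩ := Finset.exists_min_image S2 (fun b => ∑ i, |xs i - zb b i|)
    ⟨b₁, Finset.mem_filter.mpr ⟨Finset.mem_univ _, le_refl M⟩⟩
  set z : Fin n → ℝ := zb b₂ with hz
  have hz01 : ∀ i, z i = 0 ∨ z i = 1 := hzb01 b₂
  have hzM : f z ≤ M := (Finset.mem_filter.mp hb₂S).2
  have hzmin : ∀ y : Fin n → ℝ, (∀ i, y i = 0 ∨ y i = 1) → f z ≤ f y := by
    intro y hy
    obtain ⟨b, rfl⟩ := hrep y hy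
    exact le_trans hzM (hb₁ b (Finset.mem_univ b))
  refine ⟨z, hz01, hzmin, ?_⟩
  by_contra hdist
  push_neg at hdist
  -- set up the standard-form difference vector
  set u : (Fin n ⊕ Fin m) → ℝ :=
    Sum.elim (fun i => z i - xs i) (fun j => Wr.mulVec z j - Wr.mulVec xs j) with hu
  set col : (Fin n ⊕ Fin m) → Fin m → ℝ :=
    Sum.elim (fun i j => Wr j i) (fun j' j => if j = j' then (-1:ℝ) else 0) with hcol
  have hmulVec : ∀ (x : Fin n → ℝ) j, Wr.mulVec x j = ∑ i, Wr j i * x i := fun x j => rfl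
  have hcolsum : ∀ (w : (Fin n ⊕ Fin m) → ℝ) (j : Fin m),
      ∑ i, w i * col i j = Wr.mulVec (fun i => w (Sum.inl i)) j - w (Sum.inr j) := by
    intro w j
    rw [Fintype.sum_sum_type]
    have h2 : (∑ j' : Fin m, w (Sum.inr j') * col (Sum.inr j') j) = w (Sum.inr j) * (-1) := by
      simp only [hcol, Sum.elim_inr]
      rw [Finset.sum_eq_single j]
      · simp
      · intro b _ hb
        rw [if_neg (Ne.symm hb), mul_zero]
      · intro h; exact absurd (Finset.mem_univ j) h
    rw [h2, hmulVec]
    simp only [hcol, Sum.elim_inl]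
    rw [Finset.sum_congr rfl (fun i _ => by ring : ∀ i ∈ Finset.univ,
      w (Sum.inl i) * Wr j i = Wr j i * w (Sum.inl i))]
    ring
  have keyrel : ∀ j, ∑ i, u i * col i j = 0 := by
    intro j
    rw [hcolsum u j]
    have h1 : Wr.mulVec (fun i => u (Sum.inl i)) j = Wr.mulVec z j - Wr.mulVec xs j := by
      have h2 : Wr.mulVec (z - xs) = Wr.mulVec z - Wr.mulVec xs := Matrix.mulVec_sub Wr z xs
      have h3 : (fun i => u (Sum.inl i)) = z - xs := by
        funext i; simp [hu]
      rw [h3, h2]; rfl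
    rw [h1]
    simp [hu]
  -- integer and fractional parts
  set nn : (Fin n ⊕ Fin m) → ℕ := fun i => ⌊|u i|⌋₊ with hnn
  set ffr : (Fin n ⊕ Fin m) → ℝ := fun i => |u i| - nn i with hffr
  set sg : (Fin n ⊕ Fin m) → ℝ := fun i => if u i < 0 then -1 else 1 with hsg
  have hsgu : ∀ i, sg i * |u i| = u i := by
    intro i
    simp only [hsg]
    by_cases h : u i < 0
    · rw [if_pos h, abs_of_neg h]; ring
    · rw [if_neg h, abs_of_nonneg (not_lt.mp h)]; ring
  have hsgsq : ∀ i, sg i * sg i = 1 := by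
    intro i
    simp only [hsg]
    by_cases h : u i < 0 <;> simp [h]
  have hffr0 : ∀ i, 0 ≤ ffr i := by
    intro i
    simp only [hffr]
    have := Nat.floor_le (abs_nonneg (u i))
    simp only [hnn]
    linarith
  have hffr1 : ∀ i, ffr i < 1 := by
    intro i
    simp only [hffr, hnn]
    have := Nat.lt_floor_add_one |u i|
    linarith
  have hnnffr : ∀ i, |u i| = nn i + ffr i := by
    intro i; simp only [hffr]; ring
  -- the index type for the Steinitz argument
  set v : ((Σ i : Fin n ⊕ Fin m, Fin (nn i)) ⊕ {i : Fin n ⊕ Fin m // ffr i ≠ 0}) → Fin m → ℝ :=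
    Sum.elim (fun x j => sg x.1 * col x.1 j) (fun x j => (ffr x.1 * sg x.1) * col x.1 j) with hv
  set Frac : Finset ((Σ i : Fin n ⊕ Fin m, Fin (nn i)) ⊕ {i : Fin n ⊕ Fin m // ffr i ≠ 0}) :=
    Finset.univ.filter (fun x => x.isRight = true) with hFrac
  have hnotFrac : ∀ x, x ∉ Frac → ∃ σ, x = Sum.inl σ := by
    intro x hx
    cases x with
    | inl σ => exact ⟨σ, rfl⟩
    | inr y => exact absurd (by simp [hFrac] : Sum.inr y ∈ Frac) hx
  have hFraccard : Frac.card = Fintype.card {i : Fin n ⊕ Fin m // ffr i ≠ 0} := by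
    have heq : Frac = Finset.univ.map ⟨Sum.inr, Sum.inr_injective⟩ := by
      ext x
      simp only [hFrac, Finset.mem_filter, Finset.mem_univ, true_and, Finset.mem_map,
        Function.Embedding.coeFn_mk]
      cases x with
      | inl σ => simp
      | inr y => simp
    rw [heq, Finset.card_map, Finset.card_univ]
  -- column bounds
  have hcolbd : ∀ i j, |col i j| ≤ (Δn : ℝ) := by
    intro i j
    cases i with
    | inl a =>
      simp only [hcol, Sum.elim_inl]
      have h1 : |Wr j a| = ((W j a).natAbs : ℝ) := by
        simp [hWr, Matrix.map_apply, Nat.cast_natAbs]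
      rw [h1]
      have h2 : (W j a).natAbs ≤ Δn := by
        rw [hΔn]
        exact Finset.le_sup (f := fun p : Fin m × Fin n => (W p.1 p.2).natAbs)
          (Finset.mem_univ (j, a))
      exact_mod_cast h2
    | inr b =>
      simp only [hcol, Sum.elim_inr]
      have h1 : |if j = b then (-1:ℝ) else 0| ≤ 1 := by
        by_cases h : j = b <;> simp [h]
      have h2 : (1:ℝ) ≤ Δn := by exact_mod_cast hΔ1
      linarith
  have hsgabs : ∀ i, |sg i| = 1 := by
    intro i
    simp only [hsg]
    by_cases h : u i < 0 <;> simp [h]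
  have hvbd : ∀ x j, |v x j| ≤ (Δn:ℝ) := by
    intro x j
    cases x with
    | inl σ =>
      simp only [hv, Sum.elim_inl]
      rw [abs_mul, hsgabs, one_mul]
      exact hcolbd _ j
    | inr y =>
      simp only [hv, Sum.elim_inr]
      rw [abs_mul, abs_mul, hsgabs, mul_one]
      have h2 : |ffr y.1| ≤ 1 := by rw [abs_of_nonneg (hffr0 _)]; linarith [hffr1 y.1]
      have h3 := hcolbd y.1 j
      have h4 : (0:ℝ) ≤ |col y.1 j| := abs_nonneg _
      nlinarith
  -- total sum of the Steinitz vectors vanishes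
  have hsumv : ∀ j, ∑ x, v x j = 0 := by
    intro j
    rw [Fintype.sum_sum_type]
    have hsig : (∑ x : (Σ i : Fin n ⊕ Fin m, Fin (nn i)), v (Sum.inl x) j)
        = ∑ i : Fin n ⊕ Fin m, (nn i : ℝ) * (sg i * col i j) := by
      rw [← Finset.univ_sigma_univ, Finset.sum_sigma]
      apply Finset.sum_congr rfl
      intro i _
      have hconst : ∀ s : Fin (nn i), v (Sum.inl ⟨i, s⟩) j = sg i * col i j := fun s => rfl
      rw [Finset.sum_congr rfl (fun s _ => hconst s), Finset.sum_const, Finset.card_univ,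
        Fintype.card_fin, nsmul_eq_mul]
    have hsubt : (∑ x : {i : Fin n ⊕ Fin m // ffr i ≠ 0}, v (Sum.inr x) j)
        = ∑ i : Fin n ⊕ Fin m, (ffr i * sg i) * col i j := by
      have h1 : (∑ x ∈ Finset.univ.filter (fun i : Fin n ⊕ Fin m => ffr i ≠ 0),
            (ffr x * sg x) * col x j)
          = ∑ x : {i : Fin n ⊕ Fin m // ffr i ≠ 0}, v (Sum.inr x) j := by
        apply Finset.sum_subtype
        intro x
        simp
      rw [← h1]
      apply Finset.sum_filter_of_ne
      intro i _ hne h0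
      apply hne
      rw [h0]
      ring
    rw [hsig, hsubt, ← Finset.sum_add_distrib]
    rw [← keyrel j]
    apply Finset.sum_congr rfl
    intro i _
    have h1 := hnnffr i
    have h2 := hsgu i
    calc (nn i : ℝ) * (sg i * col i j) + (ffr i * sg i) * col i j
        = (|u i| * sg i) * col i j := by rw [h1]; ring
      _ = u i * col i j := by rw [mul_comm (|u i|) (sg i), h2]
  -- cardinality of the index type
  have hcardκ : Fintype.card ((Σ i : Fin n ⊕ Fin m, Fin (nn i)) ⊕ {i : Fin n ⊕ Fin m // ffr i ≠ 0})
      = (∑ i, nn i) + Frac.card := by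
    rw [hFraccard, Fintype.card_sum, Fintype.card_sigma]
    simp [Fintype.card_fin]
  have huabs_le : ∀ i, |u i| ≤ (nn i : ℝ) + (if ffr i ≠ 0 then 1 else 0) := by
    intro i
    by_cases h : ffr i ≠ 0
    · rw [if_pos h, hnnffr i]
      linarith [hffr1 i]
    · rw [if_neg h]
      push_neg at h
      rw [hnnffr i, h]
  have hdistle : (∑ i, |xs i - z i|) ≤
      ((Fintype.card ((Σ i : Fin n ⊕ Fin m, Fin (nn i)) ⊕ {i : Fin n ⊕ Fin m // ffr i ≠ 0})) : ℝ) := by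
    calc ∑ i : Fin n, |xs i - z i| = ∑ i : Fin n, |u (Sum.inl i)| := by
          apply Finset.sum_congr rfl
          intro i _
          rw [show u (Sum.inl i) = z i - xs i from rfl, abs_sub_comm]
      _ ≤ ∑ i : Fin n ⊕ Fin m, |u i| := by
          rw [Fintype.sum_sum_type]
          have h0 : 0 ≤ ∑ j, |u (Sum.inr j)| := Finset.sum_nonneg fun j _ => abs_nonneg _
          linarith
      _ ≤ ∑ i, ((nn i : ℝ) + (if ffr i ≠ 0 then 1 else 0)) :=
          Finset.sum_le_sum fun i _ => huabs_le i
      _ = (∑ i, (nn i:ℝ)) + ((Finset.univ.filter (fun i => ffr i ≠ 0)).card : ℝ) := by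
          rw [Finset.sum_add_distrib, Finset.sum_boole]
      _ = _ := by
          rw [hcardκ, hFraccard, Fintype.card_subtype]
          push_cast
          ring
  -- the fractional count is between 1 and 2m
  have hi₀u : ffr (Sum.inl i₀) ≠ 0 := by
    have hx0 := (hxs i₀).1
    have hx1 := (hxs i₀).2
    have habs : 0 < |u (Sum.inl i₀)| ∧ |u (Sum.inl i₀)| < 1 := by
      have hval : u (Sum.inl i₀) = z i₀ - xs i₀ := rfl
      rcases hz01 i₀ with h | h
      · rw [hval, h]
        rw [show (0:ℝ) - xs i₀ = -(xs i₀) from by ring, abs_neg,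
          abs_of_nonneg hx0]
        exact ⟨lt_of_le_of_ne hx0 (Ne.symm hi₀0), lt_of_le_of_ne hx1 hi₀1⟩
      · rw [hval, h, abs_of_nonneg (by linarith)]
        constructor <;> [linarith [lt_of_le_of_ne hx1 hi₀1]; linarith [lt_of_le_of_ne hx0 (Ne.symm hi₀0)]]
    have hnn0 : nn (Sum.inl i₀) = 0 := Nat.floor_eq_zero.mpr habs.2
    simp only [hffr, hnn0]
    push_cast
    linarith [habs.1]
  have hφ1 : 1 ≤ Frac.card := by
    rw [hFraccard]
    have : Nonempty {i : Fin n ⊕ Fin m // ffr i ≠ 0} := ⟨⟨Sum.inl i₀, hi₀u⟩⟩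
    have := Fintype.card_pos_iff.mpr this
    omega
  have hintffr : ∀ a : Fin n, (xs a = 0 ∨ xs a = 1) → ffr (Sum.inl a) = 0 := by
    intro a ha
    have hval : u (Sum.inl a) = z a - xs a := rfl
    have habs : |u (Sum.inl a)| = 0 ∨ |u (Sum.inl a)| = 1 := by
      rcases ha with h | h <;> rcases hz01 a with h' | h' <;>
        rw [hval, h, h'] <;> simp
    simp only [hffr, hnn]
    rcases habs with h | h <;> rw [h] <;> simp
  have hφ2m : Frac.card ≤ 2 * m := by
    rw [hFraccard, Fintype.card_subtype]
    have hsub : (Finset.univ.filter (fun i : Fin n ⊕ Fin m => ffr i ≠ 0)) ⊆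
        (Finset.univ.filter (fun i => xs i ≠ 0 ∧ xs i ≠ 1)).disjSum
          (Finset.univ : Finset (Fin m)) := by
      intro x hx
      rw [Finset.mem_filter] at hx
      cases x with
      | inl a =>
        rw [Finset.inl_mem_disjSum, Finset.mem_filter]
        refine ⟨Finset.mem_univ _, ?_, ?_⟩
        · intro h0
          exact hx.2 (hintffr a (Or.inl h0))
        · intro h1
          exact hx.2 (hintffr a (Or.inr h1))
      | inr b =>
        rw [Finset.inr_mem_disjSum]
        exact Finset.mem_univ _
    have := Finset.card_le_card hsub
    rw [Finset.card_disjSum, Finset.card_univ, Fintype.card_fin] at this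
    omega
  have hint : ∀ x ∉ Frac, ∀ j, ∃ zz : ℤ, v x j = (zz:ℝ) := by
    intro x hx j
    obtain ⟨σ, rfl⟩ := hnotFrac x hx
    have hcolint : ∃ w : ℤ, col σ.1 j = (w:ℝ) := by
      rcases σ with ⟨i, c⟩
      cases i with
      | inl a => exact ⟨W j a, by simp [hcol, hWr, Matrix.map_apply]⟩
      | inr b =>
        refine ⟨if j = b then -1 else 0, ?_⟩
        by_cases h : j = b <;> simp [hcol, h]
    obtain ⟨w, hw⟩ := hcolint
    by_cases h : u σ.1 < 0
    · refine ⟨-w, ?_⟩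
      show sg σ.1 * col σ.1 j = ((-w : ℤ):ℝ)
      rw [hsg]
      simp only [if_pos h, hw]
      push_cast
      ring
    · refine ⟨w, ?_⟩
      show sg σ.1 * col σ.1 j = ((w : ℤ):ℝ)
      rw [hsg]
      simp only [if_neg h, hw]
      ring
  have hbig : Frac.card * (2*m*Δn+1)^m <
      Fintype.card ((Σ i : Fin n ⊕ Fin m, Fin (nn i)) ⊕ {i : Fin n ⊕ Fin m // ffr i ≠ 0}) := by
    have h1 : ((Frac.card * (2*m*Δn+1)^m : ℕ) : ℝ) ≤ 2*m*(2*m*(Δn:ℝ)+1)^m := by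
      push_cast
      have hc : (Frac.card : ℝ) ≤ 2*(m:ℝ) := by exact_mod_cast hφ2m
      have hKpos : (0:ℝ) ≤ (2*(m:ℝ)*(Δn:ℝ)+1)^m := by positivity
      nlinarith
    have h2 := lt_of_lt_of_le hdist hdistle
    have h3 : ((Frac.card * (2*m*Δn+1)^m : ℕ) : ℝ) <
        ((Fintype.card ((Σ i : Fin n ⊕ Fin m, Fin (nn i)) ⊕ {i : Fin n ⊕ Fin m // ffr i ≠ 0})) : ℝ) :=
      lt_of_le_of_lt h1 h2
    exact_mod_cast h3
  obtain ⟨B, hBne, hBF, hBsum⟩ := exists_zero_piece m Δn v hvbd hsumv Frac hint hφ1 hbig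
  -- flip counts
  set key : ((Σ i : Fin n ⊕ Fin m, Fin (nn i)) ⊕ {i : Fin n ⊕ Fin m // ffr i ≠ 0}) →
      (Fin n ⊕ Fin m) := Sum.elim (fun σ => σ.1) (fun y => y.1) with hkey
  set cnt : (Fin n ⊕ Fin m) → ℕ := fun i => (B.filter (fun x => key x = i)).card with hcnt
  set cc : (Fin n ⊕ Fin m) → ℝ := fun i => sg i * cnt i with hcc
  have hBinl : ∀ x ∈ B, ∃ σ, x = Sum.inl σ := fun x hx => hnotFrac x (hBF x hx)
  have hccsum : ∀ j, ∑ i, cc i * col i j = 0 := by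
    intro j
    have h2 : ∑ i : Fin n ⊕ Fin m, ∑ x ∈ B.filter (fun x => key x = i), v x j
        = ∑ x ∈ B, v x j :=
      Finset.sum_fiberwise_of_maps_to (fun x _ => Finset.mem_univ (key x)) _
    have h3 : ∀ i : Fin n ⊕ Fin m, ∑ x ∈ B.filter (fun x => key x = i), v x j
        = (cnt i : ℝ) * (sg i * col i j) := by
      intro i
      have hconst : ∀ x ∈ B.filter (fun x => key x = i), v x j = sg i * col i j := by
        intro x hx
        rw [Finset.mem_filter] at hx
        obtain ⟨σ, rfl⟩ := hBinl x hx.1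
        have hσ : σ.1 = i := hx.2
        rw [show v (Sum.inl σ) j = sg σ.1 * col σ.1 j from rfl, hσ]
      rw [Finset.sum_congr rfl hconst, Finset.sum_const, nsmul_eq_mul]
    have h4 : ∑ i : Fin n ⊕ Fin m, cc i * col i j
        = ∑ i : Fin n ⊕ Fin m, (cnt i : ℝ) * (sg i * col i j) := by
      apply Finset.sum_congr rfl
      intro i _
      show sg i * (cnt i : ℝ) * col i j = (cnt i : ℝ) * (sg i * col i j)
      ring
    rw [h4, Finset.sum_congr rfl (fun i _ => (h3 i).symm), h2, hBsum j]
  have hccy : ∀ j, Wr.mulVec (fun i => cc (Sum.inl i)) j = cc (Sum.inr j) := by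
    intro j
    have h1 := hccsum j
    rw [hcolsum cc j] at h1
    linarith
  have hcnt_le_nn : ∀ i, cnt i ≤ nn i := by
    intro i
    have hmapsTo : ∀ x ∈ B.filter (fun x => key x = i),
        (Sum.elim (fun (σ : Σ i : Fin n ⊕ Fin m, Fin (nn i)) => (σ.2 : ℕ)) (fun _ => 0) x)
          ∈ Finset.range (nn i) := by
      intro x hx
      rw [Finset.mem_filter] at hx
      obtain ⟨σ, rfl⟩ := hBinl x hx.1
      have hσ : σ.1 = i := hx.2
      rw [Finset.mem_range]
      simp only [Sum.elim_inl]
      rw [← hσ]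
      exact σ.2.2
    have hinj : Set.InjOn
        (Sum.elim (fun (σ : Σ i : Fin n ⊕ Fin m, Fin (nn i)) => (σ.2 : ℕ)) (fun _ => 0))
        ((B.filter (fun x => key x = i) : Finset ((Σ i : Fin n ⊕ Fin m, Fin (nn i)) ⊕
          {i : Fin n ⊕ Fin m // ffr i ≠ 0})) : Set ((Σ i : Fin n ⊕ Fin m, Fin (nn i)) ⊕
          {i : Fin n ⊕ Fin m // ffr i ≠ 0})) := by
      intro x hx y hy hxy
      rw [Finset.mem_coe, Finset.mem_filter] at hx hy
      obtain ⟨σ, rfl⟩ := hBinl x hx.1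
      obtain ⟨τ, rfl⟩ := hBinl y hy.1
      simp only [Sum.elim_inl] at hxy
      obtain ⟨si, sc⟩ := σ
      obtain ⟨ti, tc⟩ := τ
      have h1 : si = i := hx.2
      have h2 : ti = i := hy.2
      subst h1
      subst h2
      have h3 : sc = tc := Fin.ext hxy
      rw [h3]
    have hcard := Finset.card_le_card_of_injOn _ hmapsTo hinj
    rw [Finset.card_range] at hcard
    exact hcard
  have hconf : ∀ i, 0 ≤ cc i * (u i - cc i) := by
    intro i
    have h5 : sg i * u i = |u i| := by
      have h6 : sg i * (sg i * |u i|) = sg i * u i := congrArg (fun t => sg i * t) (hsgu i)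
      rw [← mul_assoc, hsgsq i, one_mul] at h6
      exact h6.symm
    have h1 : cc i * (u i - cc i) = (cnt i : ℝ) * (|u i| - cnt i) := by
      show (sg i * (cnt i:ℝ)) * (u i - sg i * (cnt i:ℝ)) = _
      linear_combination (cnt i : ℝ) * h5 - (cnt i : ℝ)^2 * hsgsq i
    rw [h1]
    apply mul_nonneg (Nat.cast_nonneg _)
    have h2 : (cnt i : ℝ) ≤ nn i := by exact_mod_cast hcnt_le_nn i
    have h3 : (nn i : ℝ) ≤ |u i| := by
      rw [hnnffr i]
      linarith [hffr0 i]
    linarith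
  have hxcoord : ∀ i : Fin n, cc (Sum.inl i) = 0 ∨
      (cc (Sum.inl i) = u (Sum.inl i) ∧ |u (Sum.inl i)| = 1) := by
    intro i
    have hx0 := (hxs i).1
    have hx1 := (hxs i).2
    have hu1 : |u (Sum.inl i)| ≤ 1 := by
      rw [show u (Sum.inl i) = z i - xs i from rfl, abs_le]
      rcases hz01 i with h | h <;> rw [h] <;> constructor <;> linarith
    have hnn1 : nn (Sum.inl i) ≤ 1 := by
      have h1 : (⌊|u (Sum.inl i)|⌋₊) ≤ ⌊(1:ℝ)⌋₊ := Nat.floor_le_floor hu1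
      simpa using h1
    have hcnt1 : cnt (Sum.inl i) ≤ 1 := le_trans (hcnt_le_nn _) hnn1
    rcases Nat.le_one_iff_eq_zero_or_eq_one.mp hcnt1 with h | h
    · left
      show sg (Sum.inl i) * (cnt (Sum.inl i) : ℝ) = 0
      rw [h]
      simp
    · right
      have hnnge : 1 ≤ nn (Sum.inl i) := h ▸ hcnt_le_nn (Sum.inl i)
      have habs1 : |u (Sum.inl i)| = 1 := by
        have hge : (1:ℝ) ≤ |u (Sum.inl i)| := by
          have hfl := Nat.floor_le (abs_nonneg (u (Sum.inl i)))
          have : (1:ℝ) ≤ (nn (Sum.inl i) : ℝ) := by exact_mod_cast hnnge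
          exact le_trans this hfl
        linarith
      constructor
      · have hccval : cc (Sum.inl i) = sg (Sum.inl i) := by
          show sg (Sum.inl i) * (cnt (Sum.inl i) : ℝ) = sg (Sum.inl i)
          rw [h]
          simp
        rw [hccval, ← hsgu (Sum.inl i), habs1, mul_one]
      · exact habs1
  set ccx : Fin n → ℝ := fun i => cc (Sum.inl i) with hccxdef
  set z' : Fin n → ℝ := fun i => z i - ccx i with hz'def
  have huval : ∀ i : Fin n, u (Sum.inl i) = z i - xs i := fun i => rfl
  have hz'01 : ∀ i, z' i = 0 ∨ z' i = 1 := by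
    intro i
    have hx0 := (hxs i).1
    have hx1 := (hxs i).2
    rcases hxcoord i with h | ⟨h, habs⟩
    · rw [show z' i = z i - ccx i from rfl, show ccx i = cc (Sum.inl i) from rfl, h, sub_zero]
      exact hz01 i
    · rw [show z' i = z i - ccx i from rfl, show ccx i = cc (Sum.inl i) from rfl, h, huval i,
        show z i - (z i - xs i) = xs i from by ring]
      rcases hz01 i with hzi | hzi
      · right
        have habs2 : |u (Sum.inl i)| = xs i := by
          rw [huval i, hzi, show (0:ℝ) - xs i = -(xs i) from by ring, abs_neg,
            abs_of_nonneg hx0]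
        rw [← habs2, habs]
      · left
        have habs2 : |u (Sum.inl i)| = 1 - xs i := by
          rw [huval i, hzi, abs_of_nonneg (by linarith)]
        rw [habs2] at habs
        linarith
  have hcube : ∀ i, xs i + ccx i ∈ Set.Icc (0:ℝ) 1 := by
    intro i
    rcases hxcoord i with h | ⟨h, _⟩
    · rw [show ccx i = cc (Sum.inl i) from rfl, h, add_zero]
      exact hxs i
    · rw [show ccx i = cc (Sum.inl i) from rfl, h, huval i,
        show xs i + (z i - xs i) = z i from by ring]
      rcases hz01 i with hzi | hzi <;> rw [hzi] <;> constructor <;> norm_num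
  have hexchange : ∀ j, g j (Wr.mulVec (fun i => xs i + ccx i) j) + g j (Wr.mulVec z' j)
      ≤ g j (Wr.mulVec xs j) + g j (Wr.mulVec z j) := by
    intro j
    have hab : 0 ≤ (Wr.mulVec ccx j) * ((Wr.mulVec z j - Wr.mulVec xs j) - Wr.mulVec ccx j) := by
      have h1 : Wr.mulVec ccx j = cc (Sum.inr j) := hccy j
      have h2 : Wr.mulVec z j - Wr.mulVec xs j = u (Sum.inr j) := rfl
      rw [h1, h2]
      exact hconf (Sum.inr j)
    have hcx := convex_exchange (g j) (hconv j) (Wr.mulVec xs j) (Wr.mulVec ccx j)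
      ((Wr.mulVec z j - Wr.mulVec xs j) - Wr.mulVec ccx j) hab
    have e1 : Wr.mulVec xs j + Wr.mulVec ccx j = Wr.mulVec (fun i => xs i + ccx i) j := by
      have h := congrFun (Matrix.mulVec_add Wr xs ccx) j
      exact h.symm
    have e2 : Wr.mulVec xs j + (Wr.mulVec z j - Wr.mulVec xs j - Wr.mulVec ccx j)
        = Wr.mulVec z' j := by
      have h := congrFun (Matrix.mulVec_sub Wr z ccx) j
      simp only [Pi.sub_apply] at h
      have hz'e : z' = z - ccx := rfl
      rw [hz'e, h]
      ring
    have e3 : Wr.mulVec xs j + Wr.mulVec ccx j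
        + (Wr.mulVec z j - Wr.mulVec xs j - Wr.mulVec ccx j) = Wr.mulVec z j := by ring
    rw [e3, e1, e2] at hcx
    exact hcx
  have hfapp : ∀ x : Fin n → ℝ, f x = ∑ j, g j (Wr.mulVec x j) := by
    intro x
    rw [hf]
  have hfexch : f (fun i => xs i + ccx i) + f z' ≤ f xs + f z := by
    rw [hfapp, hfapp, hfapp, hfapp, ← Finset.sum_add_distrib, ← Finset.sum_add_distrib]
    exact Finset.sum_le_sum (fun j _ => hexchange j)
  have hxsle : f xs ≤ f (fun i => xs i + ccx i) := hmin _ hcube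
  have hz'le : f z' ≤ f z := by linarith
  have hccx_ne : ∃ i, ccx i ≠ 0 := by
    by_contra hall0
    push_neg at hall0
    have hy0 : ∀ j, cc (Sum.inr j) = 0 := by
      intro j
      rw [← hccy j]
      have hzero : ccx = (0 : Fin n → ℝ) := funext hall0
      rw [hzero, Matrix.mulVec_zero]
      rfl
    have hcnt0 : ∀ i, cnt i = 0 := by
      intro i
      have hcc0 : cc i = 0 := by
        cases i with
        | inl a => exact hall0 a
        | inr b => exact hy0 b
      have hsgne : sg i ≠ 0 := by
        simp only [hsg]
        by_cases hlt : u i < 0 <;> simp [hlt]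
      have hcast : (cnt i : ℝ) = 0 := by
        rcases mul_eq_zero.mp hcc0 with hcase | hcase
        · exact absurd hcase hsgne
        · exact hcase
      exact_mod_cast hcast
    obtain ⟨x₀, hx₀⟩ := hBne
    have hmem : x₀ ∈ B.filter (fun x => key x = key x₀) := Finset.mem_filter.mpr ⟨hx₀, rfl⟩
    have hpos : 0 < cnt (key x₀) := Finset.card_pos.mpr ⟨x₀, hmem⟩
    rw [hcnt0 (key x₀)] at hpos
    exact lt_irrefl 0 hpos
  have hdistdec : ∑ i, |xs i - z' i| < ∑ i, |xs i - z i| := by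
    have hterm : ∀ i, |xs i - z' i| = |xs i - z i| - |ccx i| := by
      intro i
      rcases hxcoord i with h | ⟨h, habs⟩
      · rw [show z' i = z i - ccx i from rfl, show ccx i = cc (Sum.inl i) from rfl, h]
        simp
      · rw [show z' i = z i - ccx i from rfl, show ccx i = cc (Sum.inl i) from rfl, h, huval i,
          show xs i - (z i - (z i - xs i)) = (0:ℝ) from by ring, abs_zero]
        have h2 : |xs i - z i| = 1 := by
          rw [abs_sub_comm, ← huval i]
          exact habs
        rw [h2, show |z i - xs i| = 1 from by rw [← huval i]; exact habs]
        norm_num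
    rw [Finset.sum_congr rfl (fun i _ => hterm i), Finset.sum_sub_distrib]
    obtain ⟨i1, hi1⟩ := hccx_ne
    have hpos : 0 < ∑ i, |ccx i| :=
      Finset.sum_pos' (fun i _ => abs_nonneg _) ⟨i1, Finset.mem_univ _, abs_pos.mpr hi1⟩
    linarith
  obtain ⟨b₃, hb₃⟩ := hrep z' hz'01
  have hb₃S : b₃ ∈ S2 :=
    Finset.mem_filter.mpr ⟨Finset.mem_univ _, by rw [hb₃]; exact le_trans hz'le hzM⟩
  have hfinal := hb₂min b₃ hb₃S
  rw [hb₃] at hfinal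
  linarith
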